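/- (Main theorem, radial non-existence.) Let N ≥ 2 and f : ℝ → ℝ be continuous, strictly increasing, f(0)=0, with liminf_{t→0} f(t)/t > 0, and suppose F(t)=∫₀ᵗ f(s)ds satisfies t f(t) ≥ θ₀ F(t) for some θ₀ > 1 and all |t| large. Let g : ℝ → ℝ be continuous with g²(t) ≠ 2F(t) for all t and lim_{|t|→∞} g²(t)/(2F(t)) ≠ 1. Then there exists R* > 0 (depending on f and g) such that for every R > R*, there is no U ∈ C²([0,R]) solving −u'' − (N−1)u'/r + f(u) = 0 on (0,R) with u'(0) = 0 and u'(R) = g(u(R)). -/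

import Mathlib

open Filter

theorem stmt17 (N : ℕ) (hN : 2 ≤ N)
    (f : ℝ → ℝ) (hf : Continuous f) (hmono : StrictMono f) (hf0 : f 0 = 0)
    (hliminf : 0 < Filter.liminf (fun t => f t / t) (nhdsWithin 0 {(0:ℝ)}ᶜ))
    (F : ℝ → ℝ) (hF : ∀ t, F t = ∫ s in (0:ℝ)..t, f s)
    (θ₀ : ℝ) (hθ : 1 < θ₀) (T : ℝ) (hT : 0 < T)
    (hAR : ∀ t : ℝ, T ≤ |t| → θ₀ * F t ≤ t * f t)
    (g : ℝ → ℝ) (hg : Continuous g)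
    (hne : ∀ t : ℝ, g t ^ 2 ≠ 2 * F t)
    (hlim : ¬ Tendsto (fun t => g t ^ 2 / (2 * F t))
      (Filter.comap (fun t : ℝ => |t|) Filter.atTop) (nhds 1)) :
    ∃ Rstar > (0:ℝ), ∀ R > Rstar,
      ¬ ∃ u : ℝ → ℝ, ContDiffOn ℝ 2 u (Set.Icc 0 R) ∧
        (∀ r ∈ Set.Ioo (0:ℝ) R,
          -deriv (deriv u) r - ((N:ℝ) - 1) / r * deriv u r + f (u r) = 0) ∧
        deriv u 0 = 0 ∧ deriv u R = g (u R) := by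
  -- F is differentiable with derivative f
  have hFeq : F = fun t => ∫ s in (0:ℝ)..t, f s := funext hF
  have hFd : ∀ t, HasDerivAt F (f t) t := by
    intro t
    rw [hFeq]
    exact (hf.integral_hasStrictDerivAt 0 t).hasDerivAt
  have hFc : Continuous F := by
    have : Differentiable ℝ F := fun t => (hFd t).differentiableAt
    exact this.continuous
  have hF0 : F 0 = 0 := by rw [hF]; simp
  -- F is nonnegative
  have hFnonneg : ∀ t, 0 ≤ F t := by
    intro t
    rcases le_or_gt 0 t with h | h
    · rw [hF]
      exact intervalIntegral.integral_nonneg h fun s hs => by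
        simpa [hf0] using hmono.monotone hs.1
    · have h1 : 0 ≤ ∫ s in t..(0:ℝ), -f s :=
        intervalIntegral.integral_nonneg h.le fun s hs => by
          simpa [hf0, neg_nonneg] using hmono.monotone hs.2
      rw [intervalIntegral.integral_neg] at h1
      rw [hF, intervalIntegral.integral_symm]
      linarith
  -- g^2 > 2F everywhere
  have hgpos : ∀ t, 2 * F t < g t ^ 2 := by
    intro t
    by_contra hc
    push_neg at hc
    have ht : g t ^ 2 - 2 * F t < 0 := sub_neg.2 (lt_of_le_of_ne hc (hne t))
    have h0 : 0 < g 0 ^ 2 - 2 * F 0 := by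
      have h1 : g 0 ^ 2 ≠ 0 := by simpa [hF0] using hne 0
      have h2 : 0 < g 0 ^ 2 := lt_of_le_of_ne (sq_nonneg _) (Ne.symm h1)
      rw [hF0]; linarith
    have hcont : ContinuousOn (fun x => g x ^ 2 - 2 * F x) (Set.uIcc t 0) :=
      ((hg.pow 2).sub (continuous_const.mul hFc)).continuousOn
    have h00 : (0:ℝ) ∈ Set.uIcc (g t ^ 2 - 2 * F t) (g 0 ^ 2 - 2 * F 0) :=
      Set.mem_uIcc.2 (Or.inl ⟨ht.le, h0.le⟩)
    obtain ⟨s, _, hs⟩ := intermediate_value_uIcc hcont h00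
    have hs' : g s ^ 2 - 2 * F s = 0 := hs
    exact hne s (by linarith)
  have hgne : ∀ t, g t ≠ 0 := by
    intro t h
    have := hgpos t
    rw [h] at this
    nlinarith [hFnonneg t]
  refine ⟨1, one_pos, fun R hR ⟨u, hu, hode, hu0, huR⟩ => ?_⟩
  have hR0 : (0:ℝ) < R := lt_trans one_pos hR
  set s : Set ℝ := Set.Icc 0 R with hsdef
  have hs : UniqueDiffOn ℝ s := uniqueDiffOn_Icc hR0
  set φ : ℝ → ℝ := derivWithin u s with hφdef
  have hφcd : ContDiffOn ℝ 1 φ s := hu.derivWithin hs (by norm_num)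
  have hφc : ContinuousOn φ s := hφcd.continuousOn
  set ψ : ℝ → ℝ := derivWithin φ s with hψdef
  have hψc : ContinuousOn ψ s := hφcd.continuousOn_derivWithin hs le_rfl
  have hmem : ∀ r ∈ Set.Ioo (0:ℝ) R, s ∈ nhds r := fun r hr =>
    Icc_mem_nhds hr.1 hr.2
  -- interior identifications
  have hφeq : ∀ r ∈ Set.Ioo (0:ℝ) R, φ r = deriv u r := fun r hr =>
    derivWithin_of_mem_nhds (hmem r hr)
  have hφdiff : ∀ r ∈ Set.Ioo (0:ℝ) R, DifferentiableAt ℝ φ r := fun r hr =>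
    ((hφcd.differentiableOn one_ne_zero) r (Set.Ioo_subset_Icc_self hr)).differentiableAt
      (hmem r hr)
  have hφderiv : ∀ r ∈ Set.Ioo (0:ℝ) R, deriv φ r = deriv (deriv u) r := by
    intro r hr
    apply Filter.EventuallyEq.deriv_eq
    filter_upwards [isOpen_Ioo.mem_nhds hr] with x hx
    exact hφeq x hx
  have hψeq : ∀ r ∈ Set.Ioo (0:ℝ) R, ψ r = deriv (deriv u) r := by
    intro r hr
    rw [hψdef, derivWithin_of_mem_nhds (hmem r hr), hφderiv r hr]
  -- the ODE in terms of φ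
  have hode' : ∀ r ∈ Set.Ioo (0:ℝ) R,
      deriv (deriv u) r = f (u r) - ((N:ℝ) - 1) / r * φ r := by
    intro r hr
    have := hode r hr
    rw [hφeq r hr]
    linarith
  -- the energy
  set E : ℝ → ℝ := fun r => φ r ^ 2 / 2 - F (u r) with hEdef
  have hEc : ContinuousOn E s :=
    ((hφc.pow 2).div_const 2).sub (hFc.comp_continuousOn hu.continuousOn)
  have hEderiv : ∀ r ∈ Set.Ioo (0:ℝ) R,
      HasDerivAt E (-(((N:ℝ) - 1) / r) * φ r ^ 2) r := by
    intro r hr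
    have hud : DifferentiableAt ℝ u r :=
      ((hu.differentiableOn (by norm_num)) r (Set.Ioo_subset_Icc_self hr)).differentiableAt
        (hmem r hr)
    have h1 : HasDerivAt (fun x => φ x ^ 2 / 2) (φ r * deriv φ r) r := by
      have := ((hφdiff r hr).hasDerivAt.pow 2).div_const 2
      exact this.congr_deriv (by ring)
    have h2 : HasDerivAt (fun x => F (u x)) (f (u r) * deriv u r) r :=
      (hFd (u r)).comp r hud.hasDerivAt
    have := h1.sub h2
    exact this.congr_deriv (by
      rw [hφderiv r hr, hode' r hr, ← hφeq r hr]
      ring)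
  have hEanti : AntitoneOn E s := by
    apply antitoneOn_of_deriv_nonpos (convex_Icc 0 R) hEc
    · intro r hr
      rw [interior_Icc] at hr
      exact ((hEderiv r hr).differentiableAt).differentiableWithinAt
    · intro r hr
      rw [interior_Icc] at hr
      rw [(hEderiv r hr).deriv]
      have hN1 : (0:ℝ) ≤ (N:ℝ) - 1 := by
        have : (2:ℝ) ≤ (N:ℝ) := by exact_mod_cast hN
        linarith
      have : 0 ≤ ((N:ℝ) - 1) / r * φ r ^ 2 :=
        mul_nonneg (div_nonneg hN1 hr.1.le) (sq_nonneg _)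
      linarith
  -- φ 0 = 0
  have hne0 : (nhdsWithin (0:ℝ) (Set.Ioo 0 R)).NeBot := by
    rw [← mem_closure_iff_nhdsWithin_neBot, closure_Ioo hR0.ne]
    exact Set.left_mem_Icc.2 hR0.le
  have h0mem : (0:ℝ) ∈ s := Set.left_mem_Icc.2 hR0.le
  have hsub : Set.Ioo (0:ℝ) R ⊆ s := Set.Ioo_subset_Icc_self
  have hφ0 : φ 0 = 0 := by
    have hL : Tendsto (fun r => r * (f (u r) - ψ r)) (nhdsWithin 0 (Set.Ioo 0 R))
        (nhds (0 * (f (u 0) - ψ 0))) := by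
      apply Tendsto.mul
      · exact tendsto_id.mono_left nhdsWithin_le_nhds
      · apply Tendsto.sub
        · exact ((hf.comp_continuousOn hu.continuousOn) 0 h0mem).mono hsub
        · exact (hψc 0 h0mem).mono hsub
    have heq : ∀ r ∈ Set.Ioo (0:ℝ) R, r * (f (u r) - ψ r) = ((N:ℝ) - 1) * φ r := by
      intro r hr
      have hrne : r ≠ 0 := hr.1.ne'
      rw [hψeq r hr, hode' r hr]
      field_simp
      ring
    have hL2 : Tendsto (fun r => ((N:ℝ) - 1) * φ r) (nhdsWithin 0 (Set.Ioo 0 R))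
        (nhds 0) := by
      have := hL.congr' (by
        filter_upwards [self_mem_nhdsWithin] with r hr
        exact heq r hr)
      simpa using this
    have hL3 : Tendsto (fun r => ((N:ℝ) - 1) * φ r) (nhdsWithin 0 (Set.Ioo 0 R))
        (nhds (((N:ℝ) - 1) * φ 0)) :=
      (tendsto_const_nhds.mul ((hφc 0 h0mem).mono hsub))
    have huni : ((N:ℝ) - 1) * φ 0 = 0 := tendsto_nhds_unique hL3 hL2
    have hN1 : ((N:ℝ) - 1) ≠ 0 := by
      have : (2:ℝ) ≤ (N:ℝ) := by exact_mod_cast hN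
      linarith
    exact (mul_eq_zero.1 huni).resolve_left hN1
  -- E 0 ≤ 0
  have hE0 : E 0 ≤ 0 := by
    rw [hEdef]
    simp only [hφ0]
    have := hFnonneg (u 0)
    norm_num
    linarith
  -- φ R = g (u R)
  have hudR : DifferentiableAt ℝ u R := by
    by_contra hc
    rw [deriv_zero_of_not_differentiableAt hc] at huR
    exact hgne (u R) huR.symm
  have hφR : φ R = g (u R) := by
    rw [hφdef, hudR.derivWithin (hs R (Set.right_mem_Icc.2 hR0.le)), huR]
  have hERpos : 0 < E R := by
    rw [hEdef]
    simp only [hφR]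
    have := hgpos (u R)
    linarith
  have : E R ≤ E 0 := hEanti h0mem (Set.right_mem_Icc.2 hR0.le) hR0.le
  linarith
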